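/- Let N_φ, N_ψ ∈ ℂ, define φₙ(x) = (N_φ/(2ⁿ √(n!))) Hₙ(sinh x) e^{−cosh²x}, ψₙ(x) = (2N_ψ/√(n!)) Hₙ(sinh x) cosh x, and eₙ(s) = (2ⁿ n! √π)^{−1/2} Hₙ(s) e^{−s²/2}. For h : ℝ → ℂ set h_{[−]}(s) = h(arsinh s) e^{s²/2} and h_{[+]}(s) = h(arsinh s) e^{−s²/2}/√(1+s²), and let E_c = { h ∈ L²(ℝ) : h_{[−]} ∈ L²(ℝ) }. Then for every f, g ∈ E_c and every n ≥ 0: ∫_ℝ conj(f(x)) φₙ(x) dx = (N_φ π^{1/4}/(2^{n/2} e)) ∫_ℝ conj(f_{[+]}(s)) eₙ(s) ds, and ∫_ℝ conj(ψₙ(x)) g(x) dx = 2 conj(N_ψ) 2^{n/2} π^{1/4} ∫_ℝ conj(eₙ(s)) g_{[−]}(s) ds; in particular all four integrals are finite. -/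

import Mathlib

open MeasureTheory

/-- The physicist's Hermite polynomials:
`H₀(y) = 1`, `Hₙ(y) = 2y H_{n−1}(y) − H_{n−1}′(y)`. -/
noncomputable def hermiteH : ℕ → ℝ → ℝ
  | 0 => fun _ => 1
  | n + 1 => fun y => 2 * y * hermiteH n y - deriv (hermiteH n) y

/-- The Hermite functions `eₙ(s) = (2ⁿ n! √π)^{−1/2} Hₙ(s) e^{−s²/2}`. -/
noncomputable def hermFun (n : ℕ) (s : ℝ) : ℝ :=
  (Real.sqrt (2 ^ n * n.factorial * Real.sqrt Real.pi))⁻¹ * hermiteH n s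
    * Real.exp (-s ^ 2 / 2)

/-- `h_{[−]}(s) = h(arsinh s) e^{s²/2}`. -/
noncomputable def minusT (h : ℝ → ℂ) : ℝ → ℂ :=
  fun s => h (Real.arsinh s) * (Real.exp (s ^ 2 / 2) : ℂ)

/-- `h_{[+]}(s) = h(arsinh s) e^{−s²/2}/√(1+s²)`. -/
noncomputable def plusT (h : ℝ → ℂ) : ℝ → ℂ :=
  fun s => h (Real.arsinh s) * (Real.exp (-s ^ 2 / 2) : ℂ) / (Real.sqrt (1 + s ^ 2) : ℂ)

/-- `E_c = { h ∈ L² : h_{[−]} ∈ L² }`. -/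
def Ec : Set (ℝ → ℂ) :=
  {h | MemLp h 2 (volume : Measure ℝ) ∧ MemLp (minusT h) 2 (volume : Measure ℝ)}

/- ### Auxiliary lemmas -/

lemma hermiteH_isPoly (n : ℕ) : ∃ p : Polynomial ℝ, hermiteH n = fun y => p.eval y := by
  induction n with
  | zero => exact ⟨1, by funext y; simp [hermiteH]⟩
  | succ n ih =>
    obtain ⟨p, hp⟩ := ih
    refine ⟨Polynomial.C 2 * Polynomial.X * p - p.derivative, ?_⟩
    funext y
    show 2 * y * hermiteH n y - deriv (hermiteH n) y = _
    rw [hp]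
    simp [Polynomial.deriv]

lemma poly_bound (p : Polynomial ℝ) : ∃ M : ℝ, ∀ s : ℝ, |p.eval s| ≤ M * Real.exp (s ^ 2 / 4) := by
  induction p using Polynomial.induction_on' with
  | add p q hp hq =>
    obtain ⟨M, hM⟩ := hp; obtain ⟨N, hN⟩ := hq
    refine ⟨M + N, fun s => ?_⟩
    calc |(p + q).eval s| = |p.eval s + q.eval s| := by rw [Polynomial.eval_add]
      _ ≤ |p.eval s| + |q.eval s| := abs_add_le _ _
      _ ≤ M * Real.exp (s ^ 2 / 4) + N * Real.exp (s ^ 2 / 4) := add_le_add (hM s) (hN s)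
      _ = (M + N) * Real.exp (s ^ 2 / 4) := by ring
  | monomial i a =>
    refine ⟨|a| * 4 ^ i * i.factorial * Real.exp (1 / 4), fun s => ?_⟩
    have h1 : |s| ≤ 1 + s ^ 2 := by nlinarith [sq_abs s, sq_nonneg (|s| - 1), abs_nonneg s]
    have h3 : (1 + s ^ 2) ^ i ≤ 4 ^ i * (i.factorial : ℝ) * Real.exp ((1 + s ^ 2) / 4) := by
      have h4 := Real.pow_div_factorial_le_exp (x := (1 + s ^ 2) / 4) (by positivity) i
      rw [div_pow, div_div] at h4
      have h5 : (0 : ℝ) < 4 ^ i * (i.factorial : ℝ) := by positivity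
      calc (1 + s ^ 2) ^ i
          = ((1 + s ^ 2) ^ i / (4 ^ i * (i.factorial : ℝ))) * (4 ^ i * (i.factorial : ℝ)) := by
            field_simp
        _ ≤ Real.exp ((1 + s ^ 2) / 4) * (4 ^ i * (i.factorial : ℝ)) :=
            mul_le_mul_of_nonneg_right h4 h5.le
        _ = 4 ^ i * (i.factorial : ℝ) * Real.exp ((1 + s ^ 2) / 4) := by ring
    calc |(Polynomial.monomial i a).eval s| = |a| * |s| ^ i := by
          simp [Polynomial.eval_monomial, abs_mul, abs_pow]
      _ ≤ |a| * (1 + s ^ 2) ^ i :=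
          mul_le_mul_of_nonneg_left (pow_le_pow_left₀ (abs_nonneg s) h1 i) (abs_nonneg a)
      _ ≤ |a| * (4 ^ i * (i.factorial : ℝ) * Real.exp ((1 + s ^ 2) / 4)) :=
          mul_le_mul_of_nonneg_left h3 (abs_nonneg a)
      _ = |a| * 4 ^ i * (i.factorial : ℝ) * Real.exp (1 / 4) * Real.exp (s ^ 2 / 4) := by
          rw [show (1 + s ^ 2) / 4 = 1 / 4 + s ^ 2 / 4 by ring, Real.exp_add]; ring

lemma hermiteH_bound (n : ℕ) :
    ∃ M : ℝ, 0 ≤ M ∧ ∀ s : ℝ, |hermiteH n s| ≤ M * Real.exp (s ^ 2 / 4) := by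
  obtain ⟨p, hp⟩ := hermiteH_isPoly n
  obtain ⟨M, hM⟩ := poly_bound p
  refine ⟨M, ?_, fun s => by rw [hp]; exact hM s⟩
  exact le_trans (abs_nonneg _) (by simpa using hM 0)

lemma hermiteH_continuous (n : ℕ) : Continuous (hermiteH n) := by
  obtain ⟨p, hp⟩ := hermiteH_isPoly n
  rw [hp]; exact p.continuous

lemma gauss_memL2 : MemLp (fun x : ℝ => Real.exp (-x ^ 2 / 4)) 2 (volume : Measure ℝ) := by
  have hc : Continuous fun x : ℝ => Real.exp (-x ^ 2 / 4) := by continuity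
  rw [memLp_two_iff_integrable_sq hc.aestronglyMeasurable]
  have h : (fun x : ℝ => Real.exp (-x ^ 2 / 4) ^ 2)
      = fun x : ℝ => Real.exp (-(1 / 2 : ℝ) * x ^ 2) := by
    funext x; rw [pow_two, ← Real.exp_add]; ring_nf
  rw [h]
  exact integrable_exp_neg_mul_sq (by norm_num)

lemma memL2_of_gauss_bound {F : ℝ → ℂ} (hF : AEStronglyMeasurable F (volume : Measure ℝ))
    {M : ℝ} (h : ∀ x, ‖F x‖ ≤ M * Real.exp (-x ^ 2 / 4)) : MemLp F 2 (volume : Measure ℝ) := by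
  have hg : MemLp (fun x : ℝ => M * Real.exp (-x ^ 2 / 4)) 2 (volume : Measure ℝ) :=
    gauss_memL2.const_mul M
  refine hg.of_le hF (Filter.Eventually.of_forall fun x => (h x).trans ?_)
  rw [Real.norm_eq_abs, abs_mul, abs_of_pos (Real.exp_pos _)]
  exact mul_le_mul_of_nonneg_right (le_abs_self M) (Real.exp_pos _).le

lemma integrable_mul_L2 {u v : ℝ → ℂ} (hu : MemLp u 2 (volume : Measure ℝ))
    (hv : MemLp v 2 (volume : Measure ℝ)) : Integrable (fun x => u x * v x) volume := by
  have h := hv.smul hu (p := 2) (q := 2) (r := 1) (hpqr := ⟨by simp [ENNReal.inv_two_add_inv_two]⟩)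
  rw [← memLp_one_iff_integrable]
  exact h

lemma memL2_conj {u : ℝ → ℂ} (hu : MemLp u 2 (volume : Measure ℝ)) :
    MemLp (fun x => (starRingEnd ℂ) (u x)) 2 (volume : Measure ℝ) :=
  hu.of_le (RCLike.continuous_conj.comp_aestronglyMeasurable hu.1)
    (Filter.Eventually.of_forall fun x => by simp)

lemma cov_integrable_iff (G : ℝ → ℂ) :
    Integrable G (volume : Measure ℝ) ↔
      Integrable (fun x => Real.cosh x • G (Real.sinh x)) (volume : Measure ℝ) := by
  have h := integrableOn_image_iff_integrableOn_abs_deriv_smul (s := Set.univ)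
    MeasurableSet.univ (fun x _ => (Real.hasDerivAt_sinh x).hasDerivWithinAt)
    Real.sinh_injective.injOn G
  rw [Set.image_univ, Real.sinh_surjective.range_eq] at h
  simp only [integrableOn_univ] at h
  have habs : (fun x => |Real.cosh x| • G (Real.sinh x))
      = fun x => Real.cosh x • G (Real.sinh x) :=
    funext fun x => by rw [abs_of_pos (Real.cosh_pos x)]
  rw [habs] at h
  exact h

lemma cov_integral (G : ℝ → ℂ) :
    ∫ s : ℝ, G s = ∫ x : ℝ, Real.cosh x • G (Real.sinh x) := by
  have h := integral_image_eq_integral_abs_deriv_smul (s := Set.univ)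
    MeasurableSet.univ (fun x _ => (Real.hasDerivAt_sinh x).hasDerivWithinAt)
    Real.sinh_injective.injOn G
  rw [Set.image_univ, Real.sinh_surjective.range_eq, setIntegral_univ, setIntegral_univ] at h
  have habs : (fun x => |Real.cosh x| • G (Real.sinh x))
      = fun x => Real.cosh x • G (Real.sinh x) :=
    funext fun x => by rw [abs_of_pos (Real.cosh_pos x)]
  rw [habs] at h
  exact h

lemma sqrt_split (n : ℕ) : Real.sqrt (2 ^ n * n.factorial * Real.sqrt Real.pi)
    = Real.sqrt 2 ^ n * Real.sqrt n.factorial * Real.pi ^ ((1 : ℝ) / 4) := by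
  have h2 : Real.sqrt ((2 : ℝ) ^ n) = Real.sqrt 2 ^ n := by
    have h : ((Real.sqrt 2) ^ n) ^ 2 = (2 : ℝ) ^ n := by
      rw [← pow_mul, mul_comm, pow_mul, Real.sq_sqrt (by norm_num : (0:ℝ) ≤ 2)]
    rw [← h, Real.sqrt_sq (by positivity)]
  have h4 : Real.sqrt (Real.sqrt Real.pi) = Real.pi ^ ((1 : ℝ) / 4) := by
    rw [Real.sqrt_eq_rpow, Real.sqrt_eq_rpow, ← Real.rpow_mul Real.pi_nonneg]
    norm_num
  rw [Real.sqrt_mul (by positivity), Real.sqrt_mul (by positivity), h2, h4]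

lemma const1 (n : ℕ) : Real.exp (-1) / (2 ^ n * Real.sqrt n.factorial)
    = Real.pi ^ ((1 : ℝ) / 4) / (Real.sqrt 2 ^ n * Real.exp 1)
      * (Real.sqrt (2 ^ n * n.factorial * Real.sqrt Real.pi))⁻¹ := by
  rw [sqrt_split n, Real.exp_neg]
  have h22 : Real.sqrt 2 ^ n * Real.sqrt 2 ^ n = 2 ^ n := by
    rw [← mul_pow, Real.mul_self_sqrt (by norm_num : (0:ℝ) ≤ 2)]
  have hs2 : (0:ℝ) < Real.sqrt 2 := Real.sqrt_pos.mpr (by norm_num)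
  have hsn : (0:ℝ) < Real.sqrt n.factorial :=
    Real.sqrt_pos.mpr (by exact_mod_cast n.factorial_pos)
  have hp4 : (0:ℝ) < Real.pi ^ ((1:ℝ)/4) := Real.rpow_pos_of_pos Real.pi_pos _
  have he : (0:ℝ) < Real.exp 1 := Real.exp_pos 1
  field_simp
  linear_combination h22

lemma const2 (n : ℕ) : (Real.sqrt n.factorial)⁻¹
    = Real.sqrt 2 ^ n * Real.pi ^ ((1 : ℝ) / 4)
      * (Real.sqrt (2 ^ n * n.factorial * Real.sqrt Real.pi))⁻¹ := by
  rw [sqrt_split n]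
  have hs2 : (0:ℝ) < Real.sqrt 2 := Real.sqrt_pos.mpr (by norm_num)
  have hsn : (0:ℝ) < Real.sqrt n.factorial :=
    Real.sqrt_pos.mpr (by exact_mod_cast n.factorial_pos)
  have hp4 : (0:ℝ) < Real.pi ^ ((1:ℝ)/4) := Real.rpow_pos_of_pos Real.pi_pos _
  field_simp

lemma P1 (f : ℝ → ℂ) (n : ℕ) (x : ℝ) :
    Real.cosh x • ((starRingEnd ℂ) (plusT f (Real.sinh x)) * ((hermFun n (Real.sinh x) : ℝ) : ℂ))
      = (starRingEnd ℂ) (f x)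
        * (((Real.sqrt (2 ^ n * n.factorial * Real.sqrt Real.pi))⁻¹ : ℝ) : ℂ)
        * ((hermiteH n (Real.sinh x) * Real.exp (-Real.sinh x ^ 2) : ℝ) : ℂ) := by
  have hch : Real.cosh x ≠ 0 := (Real.cosh_pos x).ne'
  have hchC : (Real.cosh x : ℂ) ≠ 0 := Complex.ofReal_ne_zero.mpr hch
  have hsq : Real.sqrt (1 + Real.sinh x ^ 2) = Real.cosh x := by
    rw [← Real.cosh_sq', Real.sqrt_sq (Real.cosh_pos x).le]
  have hee : ((Real.exp (-Real.sinh x ^ 2 / 2) : ℝ) : ℂ)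
      * ((Real.exp (-Real.sinh x ^ 2 / 2) : ℝ) : ℂ)
      = ((Real.exp (-Real.sinh x ^ 2) : ℝ) : ℂ) := by
    rw [← Complex.ofReal_mul, ← Real.exp_add]
    congr 2
    ring
  simp only [plusT, hermFun, Real.arsinh_sinh, hsq]
  rw [Complex.real_smul, map_div₀, map_mul, Complex.conj_ofReal, Complex.conj_ofReal]
  simp only [Complex.ofReal_mul, Complex.ofReal_inv]
  have hinv : (Real.cosh x : ℂ) * ((Real.cosh x : ℂ))⁻¹ = 1 := mul_inv_cancel₀ hchC
  linear_combination ((starRingEnd ℂ) (f x)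
      * ((Real.sqrt (2 ^ n * n.factorial * Real.sqrt Real.pi) : ℝ) : ℂ)⁻¹
      * ((hermiteH n (Real.sinh x) : ℝ) : ℂ)
      * ((Real.exp (-Real.sinh x ^ 2 / 2) : ℝ) : ℂ)
      * ((Real.exp (-Real.sinh x ^ 2 / 2) : ℝ) : ℂ)) * hinv
    + ((starRingEnd ℂ) (f x)
      * ((Real.sqrt (2 ^ n * n.factorial * Real.sqrt Real.pi) : ℝ) : ℂ)⁻¹
      * ((hermiteH n (Real.sinh x) : ℝ) : ℂ)) * hee

lemma P2 (g : ℝ → ℂ) (n : ℕ) (x : ℝ) :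
    Real.cosh x • ((starRingEnd ℂ) ((hermFun n (Real.sinh x) : ℝ) : ℂ) * minusT g (Real.sinh x))
      = (((Real.sqrt (2 ^ n * n.factorial * Real.sqrt Real.pi))⁻¹ : ℝ) : ℂ)
        * ((hermiteH n (Real.sinh x) : ℝ) : ℂ) * ((Real.cosh x : ℝ) : ℂ) * g x := by
  have hee : ((Real.exp (-Real.sinh x ^ 2 / 2) : ℝ) : ℂ)
      * ((Real.exp (Real.sinh x ^ 2 / 2) : ℝ) : ℂ) = 1 := by
    rw [← Complex.ofReal_mul, ← Real.exp_add,
      show -Real.sinh x ^ 2 / 2 + Real.sinh x ^ 2 / 2 = 0 by ring, Real.exp_zero,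
      Complex.ofReal_one]
  simp only [minusT, hermFun, Real.arsinh_sinh]
  rw [Complex.real_smul, Complex.conj_ofReal]
  simp only [Complex.ofReal_mul, Complex.ofReal_inv]
  linear_combination ((Real.cosh x : ℂ)
    * ((Real.sqrt (2 ^ n * n.factorial * Real.sqrt Real.pi) : ℝ) : ℂ)⁻¹
    * ((hermiteH n (Real.sinh x) : ℝ) : ℂ) * g x) * hee

/-- the compatibility forms of `f` with `φₙ` and of `ψₙ` with `g`
are genuine `L²` inner products against the Hermite functions. -/
theorem stmt13 (Nφ Nψ : ℂ)
    (φ ψ : ℕ → ℝ → ℂ)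
    (hφdef : ∀ n : ℕ, φ n = fun x =>
      Nφ / ((2 : ℂ) ^ n * (Real.sqrt n.factorial : ℂ))
        * (hermiteH n (Real.sinh x) : ℂ) * (Real.exp (-(Real.cosh x) ^ 2) : ℂ))
    (hψdef : ∀ n : ℕ, ψ n = fun x =>
      2 * Nψ / (Real.sqrt n.factorial : ℂ)
        * (hermiteH n (Real.sinh x) : ℂ) * (Real.cosh x : ℂ)) :
    ∀ f ∈ Ec, ∀ g ∈ Ec, ∀ n : ℕ,
      Integrable (fun x : ℝ => (starRingEnd ℂ) (f x) * φ n x) volume ∧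
      Integrable (fun s : ℝ => (starRingEnd ℂ) (plusT f s) * (hermFun n s : ℂ)) volume ∧
      Integrable (fun x : ℝ => (starRingEnd ℂ) (ψ n x) * g x) volume ∧
      Integrable (fun s : ℝ => (starRingEnd ℂ) ((hermFun n s : ℂ)) * minusT g s) volume ∧
      (∫ x : ℝ, (starRingEnd ℂ) (f x) * φ n x)
        = Nφ * ((Real.pi ^ ((1 : ℝ) / 4) : ℝ) : ℂ)
            / ((Real.sqrt 2 ^ n : ℂ) * ((Real.exp 1 : ℝ) : ℂ))
          * ∫ s : ℝ, (starRingEnd ℂ) (plusT f s) * (hermFun n s : ℂ) ∧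
      (∫ x : ℝ, (starRingEnd ℂ) (ψ n x) * g x)
        = 2 * (starRingEnd ℂ) Nψ * (Real.sqrt 2 ^ n : ℂ) * ((Real.pi ^ ((1 : ℝ) / 4) : ℝ) : ℂ)
          * ∫ s : ℝ, (starRingEnd ℂ) ((hermFun n s : ℂ)) * minusT g s := by
  intro f hf g hg n
  obtain ⟨M, hM0, hM⟩ := hermiteH_bound n
  have hcR : (0:ℝ) ≤ (Real.sqrt (2 ^ n * n.factorial * Real.sqrt Real.pi))⁻¹ :=
    inv_nonneg.mpr (Real.sqrt_nonneg _)
  -- L² membership of the Hermite function (as a ℂ-valued function)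
  have hHcont : Continuous fun s : ℝ => ((hermFun n s : ℝ) : ℂ) := by
    apply Complex.continuous_ofReal.comp
    exact (continuous_const.mul (hermiteH_continuous n)).mul
      (Real.continuous_exp.comp (by continuity))
  have hHC : MemLp (fun s : ℝ => ((hermFun n s : ℝ) : ℂ)) 2 (volume : Measure ℝ) := by
    apply memL2_of_gauss_bound hHcont.aestronglyMeasurable
      (M := (Real.sqrt (2 ^ n * n.factorial * Real.sqrt Real.pi))⁻¹ * M)
    intro s
    rw [Complex.norm_real, Real.norm_eq_abs]
    simp only [hermFun]
    rw [abs_mul, abs_mul, abs_of_nonneg hcR, abs_of_pos (Real.exp_pos _)]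
    calc (Real.sqrt (2 ^ n * n.factorial * Real.sqrt Real.pi))⁻¹ * |hermiteH n s|
          * Real.exp (-s ^ 2 / 2)
        ≤ (Real.sqrt (2 ^ n * n.factorial * Real.sqrt Real.pi))⁻¹
            * (M * Real.exp (s ^ 2 / 4)) * Real.exp (-s ^ 2 / 2) :=
          mul_le_mul_of_nonneg_right
            (mul_le_mul_of_nonneg_left (hM s) hcR) (Real.exp_pos _).le
      _ = (Real.sqrt (2 ^ n * n.factorial * Real.sqrt Real.pi))⁻¹ * M
            * Real.exp (s ^ 2 / 4 + -s ^ 2 / 2) := by rw [Real.exp_add]; ring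
      _ = (Real.sqrt (2 ^ n * n.factorial * Real.sqrt Real.pi))⁻¹ * M
            * Real.exp (-s ^ 2 / 4) := by
          rw [show s ^ 2 / 4 + -s ^ 2 / 2 = -s ^ 2 / 4 by ring]
  -- L² membership of x ↦ Hₙ(sinh x) e^{-sinh² x}
  have hAc : Continuous fun x : ℝ =>
      ((hermiteH n (Real.sinh x) * Real.exp (-Real.sinh x ^ 2) : ℝ) : ℂ) := by
    apply Complex.continuous_ofReal.comp
    exact ((hermiteH_continuous n).comp Real.continuous_sinh).mul
      (Real.continuous_exp.comp (by continuity))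
  have hA : MemLp (fun x : ℝ =>
      ((hermiteH n (Real.sinh x) * Real.exp (-Real.sinh x ^ 2) : ℝ) : ℂ)) 2
      (volume : Measure ℝ) := by
    apply memL2_of_gauss_bound hAc.aestronglyMeasurable (M := M)
    intro x
    rw [Complex.norm_real, Real.norm_eq_abs, abs_mul, abs_of_pos (Real.exp_pos _)]
    have h1 : x ^ 2 ≤ Real.sinh x ^ 2 := by
      have h2 : |x| ≤ Real.sinh |x| := Real.self_le_sinh_iff.mpr (abs_nonneg x)
      have h3 : |Real.sinh x| = Real.sinh |x| := Real.abs_sinh x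
      have h4 : |x| ≤ |Real.sinh x| := by rw [h3]; exact h2
      nlinarith [h4, abs_nonneg x, sq_abs x, sq_abs (Real.sinh x)]
    calc |hermiteH n (Real.sinh x)| * Real.exp (-Real.sinh x ^ 2)
        ≤ (M * Real.exp (Real.sinh x ^ 2 / 4)) * Real.exp (-Real.sinh x ^ 2) :=
          mul_le_mul_of_nonneg_right (hM _) (Real.exp_pos _).le
      _ = M * Real.exp (Real.sinh x ^ 2 / 4 + -Real.sinh x ^ 2) := by
          rw [Real.exp_add]; ring
      _ ≤ M * Real.exp (-x ^ 2 / 4) := by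
          apply mul_le_mul_of_nonneg_left _ hM0
          exact Real.exp_le_exp.mpr (by nlinarith [sq_nonneg x])
  -- integrability, f/φ pair
  have hK1eq : (fun x : ℝ => Real.cosh x •
        ((starRingEnd ℂ) (plusT f (Real.sinh x)) * ((hermFun n (Real.sinh x) : ℝ) : ℂ)))
      = fun x : ℝ => (starRingEnd ℂ) (f x)
          * ((((Real.sqrt (2 ^ n * n.factorial * Real.sqrt Real.pi))⁻¹ : ℝ) : ℂ)
            * ((hermiteH n (Real.sinh x) * Real.exp (-Real.sinh x ^ 2) : ℝ) : ℂ)) :=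
    funext fun x => by rw [P1 f n x]; ring
  have hK1 : Integrable (fun x : ℝ => Real.cosh x •
      ((starRingEnd ℂ) (plusT f (Real.sinh x)) * ((hermFun n (Real.sinh x) : ℝ) : ℂ)))
      volume := by
    rw [hK1eq]
    exact integrable_mul_L2 (memL2_conj hf.1) (hA.const_mul _)
  have hG1 : Integrable
      (fun s : ℝ => (starRingEnd ℂ) (plusT f s) * (hermFun n s : ℂ)) volume :=
    (cov_integrable_iff fun s : ℝ =>
      (starRingEnd ℂ) (plusT f s) * (hermFun n s : ℂ)).mpr hK1
  -- integrability, ψ/g pair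
  have hG2 : Integrable
      (fun s : ℝ => (starRingEnd ℂ) ((hermFun n s : ℂ)) * minusT g s) volume :=
    integrable_mul_L2 (memL2_conj hHC) hg.2
  have hK2 : Integrable (fun x : ℝ => Real.cosh x •
      ((starRingEnd ℂ) ((hermFun n (Real.sinh x) : ℝ) : ℂ) * minusT g (Real.sinh x)))
      volume :=
    (cov_integrable_iff fun s : ℝ =>
      (starRingEnd ℂ) ((hermFun n s : ℂ)) * minusT g s).mp hG2
  -- pointwise identity, f/φ pair with the final constant
  have heq1 : (fun x : ℝ => (starRingEnd ℂ) (f x) * φ n x)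
      = fun x : ℝ => (Nφ * ((Real.pi ^ ((1 : ℝ) / 4) : ℝ) : ℂ)
            / ((Real.sqrt 2 ^ n : ℂ) * ((Real.exp 1 : ℝ) : ℂ)))
          * (Real.cosh x • ((starRingEnd ℂ) (plusT f (Real.sinh x))
              * ((hermFun n (Real.sinh x) : ℝ) : ℂ))) := by
    funext x
    simp only [hφdef n]
    rw [P1 f n x]
    have hec : Real.exp (-Real.cosh x ^ 2)
        = Real.exp (-1) * Real.exp (-Real.sinh x ^ 2) := by
      rw [← Real.exp_add]; congr 1; rw [Real.cosh_sq']; ring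
    rw [hec]
    have h1 := congrArg (fun r : ℝ => (r : ℂ)) (const1 n)
    simp only [Complex.ofReal_mul, Complex.ofReal_div, Complex.ofReal_inv,
      Complex.ofReal_pow, Complex.ofReal_ofNat, Complex.ofReal_natCast] at h1 ⊢
    linear_combination (Nφ * (starRingEnd ℂ) (f x)
      * ((hermiteH n (Real.sinh x) : ℝ) : ℂ)
      * ((Real.exp (-Real.sinh x ^ 2) : ℝ) : ℂ)) * h1
  -- pointwise identity, ψ/g pair with the final constant
  have heq2 : (fun x : ℝ => (starRingEnd ℂ) (ψ n x) * g x)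
      = fun x : ℝ => (2 * (starRingEnd ℂ) Nψ * (Real.sqrt 2 ^ n : ℂ)
            * ((Real.pi ^ ((1 : ℝ) / 4) : ℝ) : ℂ))
          * (Real.cosh x • ((starRingEnd ℂ) ((hermFun n (Real.sinh x) : ℝ) : ℂ)
              * minusT g (Real.sinh x))) := by
    funext x
    simp only [hψdef n]
    rw [P2 g n x]
    have h2 := congrArg (fun r : ℝ => (r : ℂ)) (const2 n)
    simp only [Complex.ofReal_mul, Complex.ofReal_div, Complex.ofReal_inv,
      Complex.ofReal_pow, Complex.ofReal_ofNat, Complex.ofReal_natCast] at h2 ⊢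
    simp only [map_mul, map_div₀, Complex.conj_ofReal, map_ofNat]
    linear_combination (2 * (starRingEnd ℂ) Nψ
      * ((hermiteH n (Real.sinh x) : ℝ) : ℂ) * ((Real.cosh x : ℝ) : ℂ) * g x) * h2
  have hfφ : Integrable (fun x : ℝ => (starRingEnd ℂ) (f x) * φ n x) volume := by
    rw [heq1]; exact hK1.const_mul _
  have hψg : Integrable (fun x : ℝ => (starRingEnd ℂ) (ψ n x) * g x) volume := by
    rw [heq2]; exact hK2.const_mul _
  refine ⟨hfφ, hG1, hψg, hG2, ?_, ?_⟩
  · calc (∫ x : ℝ, (starRingEnd ℂ) (f x) * φ n x)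
        = ∫ x : ℝ, (Nφ * ((Real.pi ^ ((1 : ℝ) / 4) : ℝ) : ℂ)
            / ((Real.sqrt 2 ^ n : ℂ) * ((Real.exp 1 : ℝ) : ℂ)))
          * (Real.cosh x • ((starRingEnd ℂ) (plusT f (Real.sinh x))
              * ((hermFun n (Real.sinh x) : ℝ) : ℂ))) := by rw [heq1]
      _ = (Nφ * ((Real.pi ^ ((1 : ℝ) / 4) : ℝ) : ℂ)
            / ((Real.sqrt 2 ^ n : ℂ) * ((Real.exp 1 : ℝ) : ℂ)))
          * ∫ x : ℝ, Real.cosh x • ((starRingEnd ℂ) (plusT f (Real.sinh x))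
              * ((hermFun n (Real.sinh x) : ℝ) : ℂ)) := integral_const_mul _ _
      _ = Nφ * ((Real.pi ^ ((1 : ℝ) / 4) : ℝ) : ℂ)
            / ((Real.sqrt 2 ^ n : ℂ) * ((Real.exp 1 : ℝ) : ℂ))
          * ∫ s : ℝ, (starRingEnd ℂ) (plusT f s) * (hermFun n s : ℂ) :=
        congrArg _ (cov_integral fun s : ℝ =>
          (starRingEnd ℂ) (plusT f s) * (hermFun n s : ℂ)).symm
  · calc (∫ x : ℝ, (starRingEnd ℂ) (ψ n x) * g x)
        = ∫ x : ℝ, (2 * (starRingEnd ℂ) Nψ * (Real.sqrt 2 ^ n : ℂ)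
            * ((Real.pi ^ ((1 : ℝ) / 4) : ℝ) : ℂ))
          * (Real.cosh x • ((starRingEnd ℂ) ((hermFun n (Real.sinh x) : ℝ) : ℂ)
              * minusT g (Real.sinh x))) := by rw [heq2]
      _ = (2 * (starRingEnd ℂ) Nψ * (Real.sqrt 2 ^ n : ℂ)
            * ((Real.pi ^ ((1 : ℝ) / 4) : ℝ) : ℂ))
          * ∫ x : ℝ, Real.cosh x • ((starRingEnd ℂ) ((hermFun n (Real.sinh x) : ℝ) : ℂ)
              * minusT g (Real.sinh x)) := integral_const_mul _ _
      _ = 2 * (starRingEnd ℂ) Nψ * (Real.sqrt 2 ^ n : ℂ)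
            * ((Real.pi ^ ((1 : ℝ) / 4) : ℝ) : ℂ)
          * ∫ s : ℝ, (starRingEnd ℂ) ((hermFun n s : ℂ)) * minusT g s :=
        congrArg _ (cov_integral fun s : ℝ =>
          (starRingEnd ℂ) ((hermFun n s : ℂ)) * minusT g s).symm
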